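/- Let Ω ⊆ ℝ³ be a bounded measurable set and B : ℝ³ → ℝ³ an integrable vector field vanishing outside Ω, and let A be the Biot–Savart vector potential of B. Then A(x) tends to 0 as ‖x‖ → ∞; that is, the function A tends to 0 along the cocompact filter (Filter.cocompact) on ℝ³. -/

import Mathlib

open MeasureTheory Filter

noncomputable section

def cross3 (u v : EuclideanSpace ℝ (Fin 3)) : EuclideanSpace ℝ (Fin 3) :=
  (WithLp.equiv 2 (Fin 3 → ℝ)).symm
    ![u 1 * v 2 - u 2 * v 1, u 2 * v 0 - u 0 * v 2, u 0 * v 1 - u 1 * v 0]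

lemma norm_cross3_le (u v : EuclideanSpace ℝ (Fin 3)) : ‖cross3 u v‖ ≤ ‖u‖ * ‖v‖ := by
  have h : ∀ w : EuclideanSpace ℝ (Fin 3), ‖w‖ = Real.sqrt (w 0 ^ 2 + w 1 ^ 2 + w 2 ^ 2) := by
    intro w
    rw [EuclideanSpace.norm_eq]
    congr 1
    simp [Fin.sum_univ_three, sq]
  rw [h, h, h, ← Real.sqrt_mul (by positivity)]
  apply Real.sqrt_le_sqrt
  have h0 : cross3 u v 0 = u 1 * v 2 - u 2 * v 1 := rfl
  have h1 : cross3 u v 1 = u 2 * v 0 - u 0 * v 2 := rfl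
  have h2 : cross3 u v 2 = u 0 * v 1 - u 1 * v 0 := rfl
  rw [h0, h1, h2]
  nlinarith [sq_nonneg (u 0 * v 0 + u 1 * v 1 + u 2 * v 2)]

def biotSavart (Ω : Set (EuclideanSpace ℝ (Fin 3)))
    (B : EuclideanSpace ℝ (Fin 3) → EuclideanSpace ℝ (Fin 3))
    (x : EuclideanSpace ℝ (Fin 3)) : EuclideanSpace ℝ (Fin 3) :=
  (1 / (4 * Real.pi)) • ∫ y in Ω, (‖x - y‖ ^ 3)⁻¹ • cross3 (B y) (x - y)

/-- Decay of the Biot–Savart vector potential at infinity. -/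
theorem biotSavart_tendsto_zero (Ω : Set (EuclideanSpace ℝ (Fin 3)))
    (hΩ : MeasurableSet Ω) (hΩb : Bornology.IsBounded Ω)
    (B : EuclideanSpace ℝ (Fin 3) → EuclideanSpace ℝ (Fin 3))
    (hB : Integrable B) (hB0 : ∀ x ∉ Ω, B x = 0) :
    Filter.Tendsto (biotSavart Ω B)
      (Filter.cocompact (EuclideanSpace ℝ (Fin 3))) (nhds 0) := by
  obtain ⟨R, hR⟩ := hΩb.subset_closedBall 0
  set C : ℝ := ∫ y, ‖B y‖ with hC
  have hC0 : 0 ≤ C := integral_nonneg fun y => norm_nonneg _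
  -- the bounding function
  have hbound : ∀ x : EuclideanSpace ℝ (Fin 3), R + 1 ≤ ‖x‖ →
      ‖biotSavart Ω B x‖ ≤ (1 / (4 * Real.pi)) * ((‖x‖ - R)⁻¹ ^ 2 * C) := by
    intro x hx
    have hxR : (0:ℝ) < ‖x‖ - R := by linarith
    rw [biotSavart, norm_smul]
    gcongr ?_ * ?_
    · simp [abs_of_nonneg, Real.pi_nonneg]
    refine (norm_integral_le_integral_norm _).trans ?_
    have hmono : ∀ y ∈ Ω, ‖(‖x - y‖ ^ 3)⁻¹ • cross3 (B y) (x - y)‖ ≤ (‖x‖ - R)⁻¹ ^ 2 * ‖B y‖ := by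
      intro y hy
      have hyR : ‖y‖ ≤ R := by simpa using hR hy
      have hxy : ‖x‖ - R ≤ ‖x - y‖ := by
        have := norm_sub_norm_le x y
        linarith
      have hxy0 : (0:ℝ) < ‖x - y‖ := lt_of_lt_of_le hxR hxy
      rw [norm_smul]
      calc ‖(‖x - y‖ ^ 3)⁻¹‖ * ‖cross3 (B y) (x - y)‖
          ≤ (‖x - y‖ ^ 3)⁻¹ * (‖B y‖ * ‖x - y‖) := by
            rw [norm_inv, norm_pow, norm_norm]
            exact mul_le_mul_of_nonneg_left (norm_cross3_le _ _) (by positivity)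
        _ = (‖x - y‖ ^ 2)⁻¹ * ‖B y‖ := by
            field_simp
        _ ≤ (‖x‖ - R)⁻¹ ^ 2 * ‖B y‖ := by
            rw [← inv_pow]
            gcongr
    calc ∫ y in Ω, ‖(‖x - y‖ ^ 3)⁻¹ • cross3 (B y) (x - y)‖
        ≤ ∫ y in Ω, (‖x‖ - R)⁻¹ ^ 2 * ‖B y‖ := by
          refine integral_mono_of_nonneg (Filter.Eventually.of_forall fun y => norm_nonneg _)
            ((hB.norm.const_mul _).restrict) ?_
          exact (ae_restrict_iff' hΩ).2 (Filter.Eventually.of_forall hmono)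
      _ = (‖x‖ - R)⁻¹ ^ 2 * ∫ y in Ω, ‖B y‖ := integral_const_mul _ _
      _ ≤ (‖x‖ - R)⁻¹ ^ 2 * C := by
          gcongr
          rw [hC]
          exact setIntegral_le_integral hB.norm
            (Filter.Eventually.of_forall fun y => norm_nonneg _)
  -- limit of the bound
  have hlim : Tendsto (fun x : EuclideanSpace ℝ (Fin 3) =>
      (1 / (4 * Real.pi)) * ((‖x‖ - R)⁻¹ ^ 2 * C)) (cocompact _) (nhds 0) := by
    have h1 : Tendsto (fun t : ℝ => (1 / (4 * Real.pi)) * ((t - R)⁻¹ ^ 2 * C)) atTop (nhds 0) := by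
      have : Tendsto (fun t : ℝ => (t - R)⁻¹) atTop (nhds 0) :=
        tendsto_inv_atTop_zero.comp (tendsto_atTop_add_const_right _ (-R) tendsto_id)
      have := ((this.pow 2).mul_const C).const_mul (1 / (4 * Real.pi))
      simpa using this
    exact h1.comp tendsto_norm_cocompact_atTop
  refine squeeze_zero_norm' ?_ hlim
  filter_upwards [tendsto_norm_cocompact_atTop.eventually_ge_atTop (R + 1)] with x hx
  exact hbound x hx

end
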